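/- An element of the commutative ring F ⊗[ℚ] Ω is integral over the subring F ⊗ 1 if and only if it belongs to the image of the canonical algebra map F ⊗[ℚ] ℚ̄ → F ⊗[ℚ] Ω; that is, the integral closure of F in F ⊗[ℚ] Ω equals the ℚ-subalgebra of F ⊗[ℚ] Ω generated by the pure tensors a ⊗ b with a ∈ F and b ∈ ℚ̄. -/

import Mathlib

open scoped TensorProduct
open Module

set_option maxHeartbeats 1000000 in
set_option synthInstance.maxHeartbeats 400000 in
/-- Let `Ω = ℚ̄_p` be an algebraic closure of `ℚ_p`, let `ℚ̄` be the algebraic closure of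
`ℚ` inside `Ω` (i.e. `integralClosure ℚ Ω`), and let `F` be a number field.  An element of
`F ⊗[ℚ] Ω` is integral over the subring `F ⊗ 1` (i.e. over `F`, acting through the left
tensor factor) if and only if it lies in the image of the canonical map
`F ⊗[ℚ] ℚ̄ → F ⊗[ℚ] Ω`. -/
theorem isIntegral_tensor_iff_mem_range_tensor_algebraicClosure
    (p : ℕ) [Fact p.Prime] (F : Type*) [Field F] [Algebra ℚ F] [FiniteDimensional ℚ F]
    (x : F ⊗[ℚ] (AlgebraicClosure ℚ_[p])) :
    IsIntegral F x ↔
      x ∈ (Algebra.TensorProduct.map (AlgHom.id ℚ F)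
        (integralClosure ℚ (AlgebraicClosure ℚ_[p])).val).range := by
  constructor
  · intro hF

    set Ω := AlgebraicClosure ℚ_[p] with hΩ
    haveI : Algebra.IsIntegral ℚ F := Algebra.IsIntegral.of_finite ℚ F
    have hℚ : IsIntegral ℚ x := isIntegral_trans x hF
    letI : Fintype (F →ₐ[ℚ] Ω) := minpoly.AlgHom.fintype ℚ F Ω
    have hcard : Fintype.card (F →ₐ[ℚ] Ω) = finrank ℚ F := AlgHom.card ℚ F Ω
    let e : (F →ₐ[ℚ] Ω) ≃ Fin (finrank ℚ F) := Fintype.equivFinOfCardEq hcard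
    let b : Basis (F →ₐ[ℚ] Ω) ℚ F := (Module.finBasis ℚ F).reindex e.symm
    let B : Basis (F →ₐ[ℚ] Ω) Ω (Ω ⊗[ℚ] F) := Algebra.TensorProduct.basis Ω b
    let y : Ω ⊗[ℚ] F := Algebra.TensorProduct.comm ℚ F Ω x
    let c : (F →ₐ[ℚ] Ω) → Ω := fun τ => B.repr y τ
    have hx : x = ∑ τ, b τ ⊗ₜ[ℚ] c τ := by
      have h1 : ∑ τ, c τ • B τ = y := B.sum_repr y
      have h2 : x = (Algebra.TensorProduct.comm ℚ F Ω).symm y := by simp [y]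
      rw [h2, ← h1, map_sum]
      congr 1
      ext τ
      rw [Algebra.TensorProduct.basis_apply, TensorProduct.smul_tmul', smul_eq_mul, mul_one]
      simp
    letI : DecidableEq (F →ₐ[ℚ] Ω) := Classical.decEq _
    -- the matrix over the integral closure
    let Qbar := integralClosure ℚ Ω
    let N : Matrix (F →ₐ[ℚ] Ω) (F →ₐ[ℚ] Ω) Qbar :=
      fun σ τ => ⟨σ (b τ), (Algebra.IsIntegral.isIntegral (R := ℚ) (b τ)).map σ⟩
    let M : Matrix (F →ₐ[ℚ] Ω) (F →ₐ[ℚ] Ω) Ω := N.map (algebraMap Qbar Ω)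
    have hMval : ∀ σ τ, M σ τ = σ (b τ) := fun σ τ => rfl
    -- M has linearly independent rows
    have hli : LinearIndependent Ω (fun σ : F →ₐ[ℚ] Ω => M σ) := by
      let L : (F →ₗ[ℚ] Ω) →ₗ[Ω] ((F →ₐ[ℚ] Ω) → Ω) :=
        { toFun := fun f τ => f (b τ)
          map_add' := by intros; ext; simp
          map_smul' := by intros; ext; simp }
      have hLinj : Function.Injective L := by
        intro f g hfg
        refine b.ext fun τ => ?_
        exact congrFun hfg τ
      have := (linearIndependent_algHom_toLinearMap ℚ F Ω).map' L (LinearMap.ker_eq_bot.mpr hLinj)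
      exact this
    have hMunit : IsUnit M := Matrix.linearIndependent_rows_iff_isUnit.mp hli
    -- determinant of N is a unit in Qbar
    have hdetM : M.det ≠ 0 := by
      intro h
      have := hMunit.map (Matrix.detMonoidHom)
      rw [Matrix.coe_detMonoidHom] at this
      rw [h] at this
      exact this.ne_zero rfl
    have hdetmap : (algebraMap Qbar Ω) N.det = M.det := by
      rw [RingHom.map_det]; rfl
    have hdetN : IsUnit N.det := by
      have hne : (N.det : Ω) ≠ 0 := by rw [show ((N.det : Qbar) : Ω) = M.det from hdetmap]; exact hdetM
      have halg : IsAlgebraic ℚ ((N.det : Qbar) : Ω) := N.det.2.isAlgebraic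
      have hinv : IsIntegral ℚ (((N.det : Qbar) : Ω)⁻¹) := (isAlgebraic_iff_isIntegral).mp halg.inv
      refine IsUnit.of_mul_eq_one ⟨((N.det : Qbar) : Ω)⁻¹, hinv⟩ ?_
      ext
      push_cast
      exact mul_inv_cancel₀ hne
    have hNinv : N⁻¹ * N = 1 := Matrix.nonsing_inv_mul N hdetN
    -- the vector of images
    let φ : (F →ₐ[ℚ] Ω) → (F ⊗[ℚ] Ω →ₐ[ℚ] Ω) :=
      fun σ => Algebra.TensorProduct.productMap σ (AlgHom.id ℚ Ω)
    let v : (F →ₐ[ℚ] Ω) → Qbar := fun σ => ⟨φ σ x, hℚ.map (φ σ)⟩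
    have hMc : M.mulVec c = fun σ => ((v σ : Qbar) : Ω) := by
      funext σ
      have h3 : φ σ x = ∑ τ, σ (b τ) * c τ := by
        rw [hx, map_sum]
        refine Finset.sum_congr rfl fun τ _ => ?_
        simp [φ]
      simp only [Matrix.mulVec, dotProduct]
      show _ = φ σ x
      rw [h3]
      rfl
    let w : (F →ₐ[ℚ] Ω) → Qbar := N⁻¹.mulVec v
    have hc : c = fun τ => ((w τ : Qbar) : Ω) := by
      have h1 : (fun τ => ((w τ : Qbar) : Ω)) = (N⁻¹.map (algebraMap Qbar Ω)).mulVec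
          (fun σ => ((v σ : Qbar) : Ω)) := by
        funext τ
        exact (RingHom.map_mulVec (algebraMap Qbar Ω) N⁻¹ v τ)
      rw [h1, ← hMc, Matrix.mulVec_mulVec]
      have h2 : N⁻¹.map (algebraMap Qbar Ω) * M = 1 := by
        show N⁻¹.map (algebraMap Qbar Ω) * N.map (algebraMap Qbar Ω) = 1
        rw [← Matrix.map_mul, hNinv]
        exact Matrix.map_one _ (map_zero _) (map_one _)
      rw [h2, Matrix.one_mulVec]
    refine ⟨∑ τ, b τ ⊗ₜ[ℚ] w τ, ?_⟩
    rw [map_sum, hx]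
    refine Finset.sum_congr rfl fun τ _ => ?_
    simp only [AlgHom.toRingHom_eq_coe, RingHom.coe_coe, Algebra.TensorProduct.map_tmul,
      AlgHom.id_apply, hc]
    rfl
  · intro hx

    set Ω := AlgebraicClosure ℚ_[p]
    obtain ⟨y, rfl⟩ := hx
    induction y using TensorProduct.induction_on with
    | zero => simpa using isIntegral_zero
    | tmul a q =>
      have h1 : (Algebra.TensorProduct.map (AlgHom.id ℚ F)
          (integralClosure ℚ Ω).val) (a ⊗ₜ[ℚ] q) = a ⊗ₜ[ℚ] (q : Ω) := by
        simp only [Algebra.TensorProduct.map_tmul, AlgHom.id_apply, Subalgebra.coe_val]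
      rw [show (Algebra.TensorProduct.map (AlgHom.id ℚ F)
          (integralClosure ℚ Ω).val).toRingHom (a ⊗ₜ[ℚ] q)
        = (Algebra.TensorProduct.map (AlgHom.id ℚ F)
          (integralClosure ℚ Ω).val) (a ⊗ₜ[ℚ] q) from rfl, h1]
      have h2 : a ⊗ₜ[ℚ] (q : Ω) = (algebraMap F (F ⊗[ℚ] Ω) a) * ((1 : F) ⊗ₜ[ℚ] (q : Ω)) := by
        rw [Algebra.TensorProduct.algebraMap_apply, Algebra.TensorProduct.tmul_mul_tmul,
          mul_one, one_mul]
        simp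
      rw [h2]
      have h3 : IsIntegral ℚ ((1 : F) ⊗ₜ[ℚ] (q : Ω)) :=
        (q.2 : IsIntegral ℚ (q : Ω)).map
          (Algebra.TensorProduct.includeRight : Ω →ₐ[ℚ] F ⊗[ℚ] Ω)
      exact (isIntegral_algebraMap).mul (h3.tower_top (A := F))
    | add u v hu hv =>
      rw [show (Algebra.TensorProduct.map (AlgHom.id ℚ F)
          (integralClosure ℚ Ω).val).toRingHom (u + v)
        = (Algebra.TensorProduct.map (AlgHom.id ℚ F)
          (integralClosure ℚ Ω).val).toRingHom u +
          (Algebra.TensorProduct.map (AlgHom.id ℚ F)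
          (integralClosure ℚ Ω).val).toRingHom v from map_add _ u v]
      exact hu.add hv
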